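/- Let G be a simple graph with n vertices and list chromatic number χ_ℓ = s, and let 1 ≤ r ≤ s. Then λ_r(G) ≥ n / ⌈s/r⌉, i.e., ⌈s/r⌉ · λ_r(G) ≥ n. -/
import Mathlib


open SimpleGraph

/-- `c` properly colors each vertex of `S` from its list `L`. -/
def IsPartialListColoring {V : Type*} (G : SimpleGraph V) (L : V → Finset ℕ)
    (S : Set V) (c : V → ℕ) : Prop :=
  (∀ v ∈ S, c v ∈ L v) ∧ ∀ u ∈ S, ∀ v ∈ S, G.Adj u v → c u ≠ c v

/-- `λ_L(G)`: the maximum number of vertices properly colorable from the lists of `L`. -/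
noncomputable def lamL {V : Type*} (G : SimpleGraph V) (L : V → Finset ℕ) : ℕ :=
  sSup {k | ∃ (S : Finset V) (c : V → ℕ), S.card = k ∧ IsPartialListColoring G L S c}

/-- `λ_t(G)`: the minimum of `λ_L(G)` over all `t`-list assignments `L`. -/
noncomputable def lam {V : Type*} (G : SimpleGraph V) (t : ℕ) : ℕ :=
  sInf {m | ∃ L : V → Finset ℕ, (∀ v, (L v).card = t) ∧ lamL G L = m}

/-- `G` admits a full proper coloring from the lists of `L`. -/
def ListColorable {V : Type*} (G : SimpleGraph V) (L : V → Finset ℕ) : Prop :=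
  ∃ c : V → ℕ, (∀ v, c v ∈ L v) ∧ ∀ u v, G.Adj u v → c u ≠ c v

/-- The list chromatic number of `G`. -/
noncomputable def listChromaticNumber {V : Type*} (G : SimpleGraph V) : ℕ :=
  sInf {k | ∀ L : V → Finset ℕ, (∀ v, (L v).card = k) → ListColorable G L}

lemma le_lamL {V : Type*} [Fintype V] (G : SimpleGraph V) (L : V → Finset ℕ)
    (S : Finset V) (c : V → ℕ) (h : IsPartialListColoring G L S c) :
    S.card ≤ lamL G L := by
  apply le_csSup
  · refine ⟨Fintype.card V, ?_⟩
    rintro k ⟨T, c', rfl, -⟩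
    exact Finset.card_le_card (Finset.subset_univ T) |>.trans_eq Finset.card_univ
  · exact ⟨S, c, rfl, h⟩

lemma key {V : Type*} [Fintype V] (G : SimpleGraph V) (r s : ℕ)
    (hcol : ∀ L : V → Finset ℕ, (∀ v, (L v).card = s) → ListColorable G L)
    (hr : 1 ≤ r) (hrs : r ≤ s) (L : V → Finset ℕ) (hL : ∀ v, (L v).card = r) :
    Fintype.card V ≤ (s ⌈/⌉ r) * lamL G L := by
  classical
  set q := s ⌈/⌉ r with hq
  have hsq : s ≤ q * r := by
    have := le_smul_ceilDiv (b := s) (Nat.lt_of_lt_of_le Nat.zero_lt_one hr)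
    simpa [hq, smul_eq_mul, mul_comm] using this
  -- big list assignment
  set L' : V → Finset ℕ := fun v =>
    (Finset.range q ×ˢ L v).image (fun p => Nat.pair p.1 p.2) with hL'
  have hcard' : ∀ v, (L' v).card = q * r := by
    intro v
    rw [hL', Finset.card_image_of_injective, Finset.card_product, Finset.card_range, hL]
    intro p p' hpp'
    have := Nat.pair_eq_pair.mp hpp'
    exact Prod.ext this.1 this.2
  have hex : ∀ v, ∃ T ⊆ L' v, T.card = s := fun v =>
    Finset.exists_subset_card_eq (by rw [hcard' v]; exact hsq)
  choose T hT hTcard using hex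
  obtain ⟨c, hc1, hc2⟩ := hcol T hTcard
  have hmem : ∀ v, c v ∈ L' v := fun v => hT v (hc1 v)
  have hdec : ∀ v, (Nat.unpair (c v)).1 < q ∧ (Nat.unpair (c v)).2 ∈ L v := by
    intro v
    obtain ⟨p, hp, hpv⟩ := Finset.mem_image.mp (hmem v)
    obtain ⟨hp1, hp2⟩ := Finset.mem_product.mp hp
    rw [← hpv, Nat.unpair_pair]
    exact ⟨Finset.mem_range.mp hp1, hp2⟩
  set f : V → ℕ := fun v => (Nat.unpair (c v)).1 with hf
  set g : V → ℕ := fun v => (Nat.unpair (c v)).2 with hg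
  have hpart : (Finset.univ : Finset V).card =
      ∑ i ∈ Finset.range q, (Finset.univ.filter fun v => f v = i).card :=
    Finset.card_eq_sum_card_fiberwise fun v _ => Finset.mem_range.mpr (hdec v).1
  have hbound : ∀ i, (Finset.univ.filter fun v => f v = i).card ≤ lamL G L := by
    intro i
    apply le_lamL G L _ g
    constructor
    · intro v hv
      exact (hdec v).2
    · intro u hu v hv hadj hne
      simp only [Finset.coe_filter, Set.mem_setOf_eq] at hu hv
      apply hc2 u v hadj
      have : Nat.pair (f u) (g u) = Nat.pair (f v) (g v) := by
        rw [hu.2, hv.2, hne]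
      simpa [hf, hg, Nat.pair_unpair] using this
  calc Fintype.card V = _ := by rw [← Finset.card_univ, hpart]
    _ ≤ ∑ _i ∈ Finset.range q, lamL G L := Finset.sum_le_sum fun i _ => hbound i
    _ = q * lamL G L := by simp [Finset.sum_const, Finset.card_range, mul_comm]

theorem lam_ge_card_div_ceil {V : Type*} [Fintype V] (G : SimpleGraph V)
    (r s : ℕ) (hs : listChromaticNumber G = s) (hr : 1 ≤ r) (hrs : r ≤ s) :
    Fintype.card V ≤ (s ⌈/⌉ r) * lam G r := by
  classical
  have hcol : ∀ L : V → Finset ℕ, (∀ v, (L v).card = s) → ListColorable G L := by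
    have hne : {k | ∀ L : V → Finset ℕ, (∀ v, (L v).card = k) → ListColorable G L}.Nonempty := by
      by_contra h
      rw [Set.not_nonempty_iff_eq_empty] at h
      rw [listChromaticNumber, h, Nat.sInf_empty] at hs
      omega
    have := Nat.sInf_mem hne
    rwa [← listChromaticNumber, hs] at this
  have hne2 : {m | ∃ L : V → Finset ℕ, (∀ v, (L v).card = r) ∧ lamL G L = m}.Nonempty :=
    ⟨lamL G (fun _ => Finset.range r), fun _ => Finset.range r,
      fun v => Finset.card_range r, rfl⟩
  obtain ⟨L, hL, hLm⟩ := Nat.sInf_mem hne2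
  rw [lam, ← hLm]
  exact key G r s hcol hr hrs L hL
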